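/- Let h₁, …, h₉ ∈ ℝ[x] be cubic polynomials with leading coefficients a₁, …, a₉ satisfying a₁ > 0, aᵢ < 0 for 2 ≤ i ≤ 9, and a₁ ≤ |a₂|. Define the real number c by c³ = −8 a₁⁻¹ (a₂ + ⋯ + a₇), and put H(x₁, …, x₉) = h₁(x₁) + ⋯ + h₉(x₉). Then there exists ω₀ > 0 such that for every ω ∈ (0, ω₀] there exist κ > 0 and P₀ with the following property: for every real P ≥ P₀ and all real numbers x₂, …, x₉ with xᵢ ∈ [(1 + 2ω)P, (1 + 3ω)P] for 2 ≤ i ≤ 7 and xᵢ ∈ [P^{4/5}, 2P^{4/5}] for i = 8, 9, the Lebesgue measure of the set { x₁ ∈ [P, cP] : |H(x₁, …, x₉)| ≤ 1/2 } is at least κ P^{−2}. -/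

import Mathlib

open MeasureTheory

lemma cubic_eval (p : Polynomial ℝ) (hp : p.natDegree = 3) (x : ℝ) :
    p.eval x = p.coeff 0 + p.coeff 1 * x + p.coeff 2 * x^2 + p.coeff 3 * x^3 := by
  rw [Polynomial.eval_eq_sum_range, hp]
  simp [Finset.sum_range_succ]

set_option maxHeartbeats 2000000 in
/-- **Uniform major-arc measure bound (7.6).**
Let `h₁, …, h₉` be cubic polynomials with leading coefficients
`a₁ > 0 > a₂, …, a₉` and `a₁ ≤ |a₂|`, let `c` satisfy
`c³ = -8 a₁⁻¹ (a₂ + ⋯ + a₇)`, and put `H(x) = ∑ᵢ hᵢ(xᵢ)`. Then for all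
sufficiently small `ω > 0` there are `κ > 0` and `P₀` such that for all
`P ≥ P₀` and all `x₂, …, x₉` with `xᵢ ∈ [(1+2ω)P, (1+3ω)P]` (`2 ≤ i ≤ 7`)
and `xᵢ ∈ [P^{4/5}, 2P^{4/5}]` (`i = 8, 9`), the measure of
`{x₁ ∈ [P, cP] : |H(x)| ≤ 1/2}` is at least `κ P⁻²`. -/
theorem uniform_major_arc_measure_bound
    (h : Fin 9 → Polynomial ℝ) (hdeg : ∀ i, (h i).degree = 3)
    (ha1 : 0 < (h 0).leadingCoeff)
    (hai : ∀ i : Fin 9, i ≠ 0 → (h i).leadingCoeff < 0)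
    (ha12 : (h 0).leadingCoeff ≤ |(h 1).leadingCoeff|)
    (c : ℝ)
    (hc : c ^ 3 = -8 * ((h 0).leadingCoeff)⁻¹ *
      ((h 1).leadingCoeff + (h 2).leadingCoeff + (h 3).leadingCoeff +
        (h 4).leadingCoeff + (h 5).leadingCoeff + (h 6).leadingCoeff)) :
    ∃ ω₀ : ℝ, 0 < ω₀ ∧ ∀ ω : ℝ, 0 < ω → ω ≤ ω₀ →
      ∃ κ : ℝ, 0 < κ ∧ ∃ P₀ : ℝ, ∀ P : ℝ, P₀ ≤ P →
        ∀ x : Fin 9 → ℝ,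
          (∀ i : Fin 9, 1 ≤ (i : ℕ) → (i : ℕ) ≤ 6 →
            x i ∈ Set.Icc ((1 + 2 * ω) * P) ((1 + 3 * ω) * P)) →
          (∀ i : Fin 9, 7 ≤ (i : ℕ) →
            x i ∈ Set.Icc (P ^ ((4:ℝ)/5)) (2 * P ^ ((4:ℝ)/5))) →
          ENNReal.ofReal (κ * P ^ (-(2:ℝ))) ≤
            volume {t ∈ Set.Icc P (c * P) |
              |(h 0).eval t + ∑ i ∈ Finset.univ.erase (0 : Fin 9),
                (h i).eval (x i)| ≤ 1/2} := by
  have hnd : ∀ i, (h i).natDegree = 3 := fun i =>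
    Polynomial.natDegree_eq_of_degree_eq_some (hdeg i)
  obtain ⟨a, haDef⟩ : ∃ a : Fin 9 → ℝ, a = fun i => (h i).leadingCoeff := ⟨_, rfl⟩
  have haval : ∀ i, a i = (h i).leadingCoeff := fun i => by rw [haDef]
  have hac : ∀ i, a i = (h i).coeff 3 := fun i => by
    rw [haval, Polynomial.leadingCoeff, hnd]
  obtain ⟨K, hKdef⟩ : ∃ K : Fin 9 → ℝ,
      K = fun i => |(h i).coeff 0| + |(h i).coeff 1| + |(h i).coeff 2| := ⟨_, rfl⟩
  have hKval : ∀ i, K i = |(h i).coeff 0| + |(h i).coeff 1| + |(h i).coeff 2| :=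
    fun i => by rw [hKdef]
  have hK0 : ∀ i, 0 ≤ K i := fun i => by rw [hKval]; positivity
  have hKbd : ∀ (i : Fin 9) (y : ℝ), 1 ≤ y →
      |(h i).eval y - a i * y^3| ≤ K i * y^2 := by
    intro i y hy
    have hy0 : (0:ℝ) ≤ y := by linarith
    have hy2 : y ≤ y^2 := by nlinarith only [hy]
    have hy1 : (1:ℝ) ≤ y^2 := by nlinarith only [hy]
    have hrw : (h i).eval y - a i * y^3
        = (h i).coeff 0 + (h i).coeff 1 * y + (h i).coeff 2 * y^2 := by
      rw [cubic_eval _ (hnd i), hac]; ring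
    rw [hrw, hKval, abs_le]
    have h01 : |(h i).coeff 0| * 1 ≤ |(h i).coeff 0| * y^2 :=
      mul_le_mul_of_nonneg_left hy1 (abs_nonneg _)
    have h11 : -|(h i).coeff 1| * y ≤ (h i).coeff 1 * y :=
      mul_le_mul_of_nonneg_right (neg_abs_le _) hy0
    have h12 : |(h i).coeff 1| * y ≤ |(h i).coeff 1| * y^2 :=
      mul_le_mul_of_nonneg_left hy2 (abs_nonneg _)
    have h21 : -|(h i).coeff 2| * y^2 ≤ (h i).coeff 2 * y^2 :=
      mul_le_mul_of_nonneg_right (neg_abs_le _) (sq_nonneg y)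
    have u1 : (h i).coeff 1 * y ≤ |(h i).coeff 1| * y :=
      mul_le_mul_of_nonneg_right (le_abs_self _) hy0
    have u2 : (h i).coeff 2 * y^2 ≤ |(h i).coeff 2| * y^2 :=
      mul_le_mul_of_nonneg_right (le_abs_self _) (sq_nonneg y)
    constructor
    · linarith only [neg_abs_le ((h i).coeff 0), h01, h11, h12, h21]
    · linarith only [le_abs_self ((h i).coeff 0), h01, h12, u1, u2]
  have ha0 : 0 < a 0 := by rw [haval]; exact ha1
  have han : ∀ i : Fin 9, i ≠ 0 → a i < 0 := fun i hi => by
    rw [haval]; exact hai i hi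
  have ha1n : a 1 < 0 := han 1 (by decide)
  have hA : a 1 + a 2 + a 3 + a 4 + a 5 + a 6 ≤ -(a 0) := by
    rw [abs_of_neg (by rw [← haval 1]; exact ha1n)] at ha12
    rw [haval 1, haval 2, haval 3, haval 4, haval 5, haval 6, haval 0]
    have h2 := hai 2 (by decide); have h3 := hai 3 (by decide)
    have h4 := hai 4 (by decide); have h5 := hai 5 (by decide)
    have h6 := hai 6 (by decide)
    linarith only [ha12, h2, h3, h4, h5, h6]
  have hc' : a 0 * c^3 = -8 * (a 1 + a 2 + a 3 + a 4 + a 5 + a 6) := by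
    rw [hc, haval 0, haval 1, haval 2, haval 3, haval 4, haval 5, haval 6]
    field_simp
  have hc3 : (8:ℝ) ≤ c^3 := by nlinarith only [hc', hA, ha0]
  have hc2 : (2:ℝ) ≤ c := by nlinarith only [hc3, sq_nonneg (c+1), sq_nonneg c]
  obtain ⟨L, hLdef⟩ : ∃ L : ℝ,
      L = 3*|a 0| + 2*|(h 0).coeff 2| + |(h 0).coeff 1| + 1 := ⟨_, rfl⟩
  have hL1 : (1:ℝ) ≤ L := by
    have q1 := abs_nonneg (a 0); have q2 := abs_nonneg ((h 0).coeff 2)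
    have q3 := abs_nonneg ((h 0).coeff 1); rw [hLdef]
    linarith only [q1, q2, q3]
  have hLpos : 0 < L := by linarith only [hL1]
  have hcpos : (0:ℝ) < c := by linarith only [hc2]
  refine ⟨1/100, by norm_num, ?_⟩
  intro ω hω hω'
  refine ⟨(L * c^2)⁻¹, by positivity, ?_⟩
  obtain ⟨E, hEdef⟩ : ∃ E : ℝ,
      E = 4*(K 0 + K 1 + K 2 + K 3 + K 4 + K 5 + K 6 + K 7 + K 8) := ⟨_, rfl⟩
  have hE0 : 0 ≤ E := by
    have q0 := hK0 0; have q1 := hK0 1; have q2 := hK0 2; have q3 := hK0 3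
    have q4 := hK0 4; have q5 := hK0 5; have q6 := hK0 6; have q7 := hK0 7
    have q8 := hK0 8
    rw [hEdef]; linarith only [q0, q1, q2, q3, q4, q5, q6, q7, q8]
  obtain ⟨G, hGdef⟩ : ∃ G : ℝ, G = 8*(|a 7| + |a 8|) + K 0 * c^2 + E := ⟨_, rfl⟩
  have hG0 : 0 ≤ G := by
    rw [hGdef]
    linarith only [abs_nonneg (a 7), abs_nonneg (a 8),
      mul_nonneg (hK0 0) (sq_nonneg c), hE0]
  have haω : 0 < a 0 * ω := mul_pos ha0 hω
  obtain ⟨B, hBdef⟩ : ∃ B : ℝ,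
      B = 1 + E/(3*(a 0*ω)) + 1/(6*(a 0*ω)) + G/(3*a 0) := ⟨_, rfl⟩
  have hq1 : 0 ≤ E/(3*(a 0*ω)) := div_nonneg hE0 (by linarith only [haω])
  have hq2 : 0 < 1/(6*(a 0*ω)) := by
    apply div_pos one_pos; linarith only [haω]
  have hq3 : 0 ≤ G/(3*a 0) := div_nonneg hG0 (by linarith only [ha0])
  have hB1 : (1:ℝ) ≤ B := by rw [hBdef]; linarith only [hq1, hq2, hq3]
  have hB0 : (0:ℝ) < B := by linarith only [hB1]
  refine ⟨B ^ ((5:ℝ)/3), ?_⟩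
  intro P hP x hmid htail
  have hBP : B ≤ P := by
    calc B = B ^ (1:ℝ) := (Real.rpow_one B).symm
    _ ≤ B ^ ((5:ℝ)/3) := Real.rpow_le_rpow_of_exponent_le hB1 (by norm_num)
    _ ≤ P := hP
  have hP1 : (1:ℝ) ≤ P := le_trans hB1 hBP
  have hP0 : (0:ℝ) < P := by linarith only [hP1]
  have hP35 : B ≤ P ^ ((3:ℝ)/5) := by
    calc B = (B ^ ((5:ℝ)/3)) ^ ((3:ℝ)/5) := by
          rw [← Real.rpow_mul hB0.le]; norm_num
    _ ≤ P ^ ((3:ℝ)/5) := Real.rpow_le_rpow (Real.rpow_nonneg hB0.le _) hP (by norm_num)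
  have hE3 : E ≤ 3*(a 0*ω)*P := by
    have h1 : E/(3*(a 0*ω)) ≤ P := by
      have h0 : E/(3*(a 0*ω)) ≤ B := by rw [hBdef]; linarith only [hq2, hq3]
      linarith only [h0, hBP]
    rw [div_le_iff₀ (by linarith only [haω] : (0:ℝ) < 3*(a 0*ω))] at h1
    linarith only [h1]
  have hhalf : (1:ℝ) ≤ 6*(a 0*ω)*P := by
    have h1 : 1/(6*(a 0*ω)) ≤ P := by
      have h0 : 1/(6*(a 0*ω)) ≤ B := by rw [hBdef]; linarith only [hq1, hq3]
      linarith only [h0, hBP]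
    rw [div_le_iff₀ (by linarith only [haω] : (0:ℝ) < 6*(a 0*ω))] at h1
    linarith only [h1]
  have hG3 : G ≤ 3*a 0*P^((3:ℝ)/5) := by
    have h1 : G/(3*a 0) ≤ P^((3:ℝ)/5) := by
      have h0 : G/(3*a 0) ≤ B := by rw [hBdef]; linarith only [hq1, hq2]
      linarith only [h0, hP35]
    rw [div_le_iff₀ (by linarith only [ha0] : (0:ℝ) < 3*a 0)] at h1
    linarith only [h1]
  have hP212 : P^(2:ℕ) ≤ P ^ ((12:ℝ)/5) := by
    rw [← Real.rpow_natCast P 2]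
    exact Real.rpow_le_rpow_of_exponent_le hP1 (by norm_num)
  have hP1235 : P ^ ((12:ℝ)/5) * P ^ ((3:ℝ)/5) = P^(3:ℕ) := by
    rw [← Real.rpow_add hP0, ← Real.rpow_natCast P 3]; norm_num
  have hr45 : (P ^ ((4:ℝ)/5))^(3:ℕ) = P ^ ((12:ℝ)/5) := by
    rw [← Real.rpow_natCast (P ^ ((4:ℝ)/5)) 3, ← Real.rpow_mul hP0.le]; norm_num
  have hP45 : P ^ ((4:ℝ)/5) ≤ P := by
    nth_rewrite 2 [← Real.rpow_one P]
    exact Real.rpow_le_rpow_of_exponent_le hP1 (by norm_num)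
  have hP3 : P ≤ P^3 := by
    linarith only [mul_nonneg (mul_nonneg (by linarith only [hP1] : (0:ℝ) ≤ P - 1)
        (by linarith only [hP1] : (0:ℝ) ≤ P)) (by linarith only [hP1] : (0:ℝ) ≤ P),
      mul_nonneg (by linarith only [hP1] : (0:ℝ) ≤ P - 1)
        (by linarith only [hP1] : (0:ℝ) ≤ P)]
  have hPcP : P ≤ c*P := by
    linarith only [mul_nonneg (by linarith only [hc2] : (0:ℝ) ≤ c - 1) hP0.le]
  have hcP1 : (1:ℝ) ≤ c*P := le_trans hP1 hPcP
  -- x bounds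
  have hx : ∀ i : Fin 9, 1 ≤ (i:ℕ) → (i:ℕ) ≤ 6 →
      (1+2*ω)*P ≤ x i ∧ x i ≤ 2*P ∧ 1 ≤ x i ∧ x i ≤ (1+3*ω)*P := by
    intro i h1 h2
    obtain ⟨hl, hr⟩ := hmid i h1 h2
    have e1 : 1 ≤ (1+2*ω)*P := by
      linarith only [hP1, mul_nonneg (by linarith only [hω] : (0:ℝ) ≤ 2*ω) hP0.le]
    have e2 : (1+3*ω)*P ≤ 2*P := by
      linarith only [mul_nonneg (by linarith only [hω'] : (0:ℝ) ≤ 1 - 3*ω) hP0.le]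
    exact ⟨hl, le_trans hr e2, le_trans e1 hl, hr⟩
  have hxt : ∀ i : Fin 9, 7 ≤ (i:ℕ) →
      1 ≤ x i ∧ x i ≤ 2*P^((4:ℝ)/5) ∧ x i ≤ 2*P ∧ 0 ≤ x i := by
    intro i h1
    obtain ⟨hl, hr⟩ := htail i h1
    have e1 : (1:ℝ) ≤ P^((4:ℝ)/5) := Real.one_le_rpow hP1 (by norm_num)
    refine ⟨le_trans e1 hl, hr, le_trans hr (by linarith only [hP45]), ?_⟩
    linarith only [e1, hl]
  have hne : ∀ i : Fin 9, 1 ≤ (i:ℕ) → i ≠ 0 := by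
    intro i h1 hh; rw [hh] at h1; norm_num at h1
  -- per-index bounds
  have hub : ∀ i : Fin 9, 1 ≤ (i:ℕ) → (i:ℕ) ≤ 6 →
      (h i).eval (x i) ≤ a i * ((1+2*ω)*P)^3 + K i * (2*P)^2 := by
    intro i h1 h2
    obtain ⟨hl, hr2, hone, _⟩ := hx i h1 h2
    have hineg : a i < 0 := han i (hne i h1)
    have hb := (abs_le.mp (hKbd i (x i) hone)).2
    have hcube : ((1+2*ω)*P)^3 ≤ (x i)^3 :=
      pow_le_pow_left₀ (mul_nonneg (by linarith only [hω] : (0:ℝ) ≤ 1+2*ω) hP0.le) hl 3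
    have ha' : a i * (x i)^3 ≤ a i * ((1+2*ω)*P)^3 :=
      mul_le_mul_of_nonpos_left hcube hineg.le
    have hsq : (x i)^2 ≤ (2*P)^2 := pow_le_pow_left₀ (by linarith only [hone]) hr2 2
    have hKs : K i * (x i)^2 ≤ K i * (2*P)^2 := mul_le_mul_of_nonneg_left hsq (hK0 i)
    linarith only [hb, ha', hKs]
  have hlb : ∀ i : Fin 9, 1 ≤ (i:ℕ) → (i:ℕ) ≤ 6 →
      a i * ((1+3*ω)*P)^3 - K i * (2*P)^2 ≤ (h i).eval (x i) := by
    intro i h1 h2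
    obtain ⟨_, hr2, hone, hr3⟩ := hx i h1 h2
    have hineg : a i < 0 := han i (hne i h1)
    have hb := (abs_le.mp (hKbd i (x i) hone)).1
    have hcube : (x i)^3 ≤ ((1+3*ω)*P)^3 :=
      pow_le_pow_left₀ (by linarith only [hone]) hr3 3
    have ha' : a i * ((1+3*ω)*P)^3 ≤ a i * (x i)^3 :=
      mul_le_mul_of_nonpos_left hcube hineg.le
    have hsq : (x i)^2 ≤ (2*P)^2 := pow_le_pow_left₀ (by linarith only [hone]) hr2 2
    have hKs : K i * (x i)^2 ≤ K i * (2*P)^2 := mul_le_mul_of_nonneg_left hsq (hK0 i)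
    linarith only [hb, ha', hKs]
  have hubt : ∀ i : Fin 9, 7 ≤ (i:ℕ) → (h i).eval (x i) ≤ K i * (2*P)^2 := by
    intro i h1
    obtain ⟨hone, _, hr2, hxnn⟩ := hxt i h1
    have hineg : a i < 0 := han i (hne i (by omega))
    have hb := (abs_le.mp (hKbd i (x i) hone)).2
    have ha' : a i * (x i)^3 ≤ 0 :=
      mul_nonpos_of_nonpos_of_nonneg hineg.le (pow_nonneg hxnn 3)
    have hsq : (x i)^2 ≤ (2*P)^2 := pow_le_pow_left₀ hxnn hr2 2
    have hKs : K i * (x i)^2 ≤ K i * (2*P)^2 := mul_le_mul_of_nonneg_left hsq (hK0 i)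
    linarith only [hb, ha', hKs]
  have hlbt : ∀ i : Fin 9, 7 ≤ (i:ℕ) →
      a i * (8 * P^((12:ℝ)/5)) - K i * (2*P)^2 ≤ (h i).eval (x i) := by
    intro i h1
    obtain ⟨hone, hr45x, hr2, hxnn⟩ := hxt i h1
    have hineg : a i < 0 := han i (hne i (by omega))
    have hb := (abs_le.mp (hKbd i (x i) hone)).1
    have hcube : (x i)^3 ≤ 8 * P^((12:ℝ)/5) := by
      calc (x i)^3 ≤ (2*P^((4:ℝ)/5))^3 := pow_le_pow_left₀ hxnn hr45x 3
      _ = 8 * P^((12:ℝ)/5) := by rw [mul_pow, hr45]; norm_num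
    have ha' : a i * (8 * P^((12:ℝ)/5)) ≤ a i * (x i)^3 :=
      mul_le_mul_of_nonpos_left hcube hineg.le
    have hsq : (x i)^2 ≤ (2*P)^2 := pow_le_pow_left₀ hxnn hr2 2
    have hKs : K i * (x i)^2 ≤ K i * (2*P)^2 := mul_le_mul_of_nonneg_left hsq (hK0 i)
    linarith only [hb, ha', hKs]
  obtain ⟨Sv, hSvdef⟩ : ∃ S : ℝ,
      S = ∑ i ∈ Finset.univ.erase (0 : Fin 9), (h i).eval (x i) := ⟨_, rfl⟩
  rw [show (∑ i ∈ Finset.univ.erase (0 : Fin 9), (h i).eval (x i)) = Sv from hSvdef.symm]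
  have hSexp : Sv = (h 1).eval (x 1) + (h 2).eval (x 2) + (h 3).eval (x 3)
      + (h 4).eval (x 4) + (h 5).eval (x 5) + (h 6).eval (x 6)
      + (h 7).eval (x 7) + (h 8).eval (x 8) := by
    rw [hSvdef, show (Finset.univ.erase (0:Fin 9)) = {1,2,3,4,5,6,7,8} from by decide]
    simp [Finset.sum_insert, Finset.mem_insert]
    ring
  have b1u := hub 1 (by decide) (by decide)
  have b2u := hub 2 (by decide) (by decide)
  have b3u := hub 3 (by decide) (by decide)
  have b4u := hub 4 (by decide) (by decide)
  have b5u := hub 5 (by decide) (by decide)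
  have b6u := hub 6 (by decide) (by decide)
  have b7u := hubt 7 (by decide)
  have b8u := hubt 8 (by decide)
  have b1l := hlb 1 (by decide) (by decide)
  have b2l := hlb 2 (by decide) (by decide)
  have b3l := hlb 3 (by decide) (by decide)
  have b4l := hlb 4 (by decide) (by decide)
  have b5l := hlb 5 (by decide) (by decide)
  have b6l := hlb 6 (by decide) (by decide)
  have b7l := hlbt 7 (by decide)
  have b8l := hlbt 8 (by decide)
  have hcube1 : 1 + 6*ω ≤ (1+2*ω)^3 := by
    nlinarith only [sq_nonneg ω, hω.le, mul_nonneg hω.le (sq_nonneg ω)]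
  have e1 : a 0 + (a 1 + a 2 + a 3 + a 4 + a 5 + a 6)*(1+2*ω)^3 ≤ -(6*(a 0*ω)) := by
    have h1 : (a 1 + a 2 + a 3 + a 4 + a 5 + a 6)*(1+2*ω)^3 ≤ (-(a 0))*(1+2*ω)^3 :=
      mul_le_mul_of_nonneg_right hA (by positivity)
    have h2 : (-(a 0))*(1+2*ω)^3 ≤ (-(a 0))*(1+6*ω) :=
      mul_le_mul_of_nonpos_left hcube1 (by linarith only [ha0])
    linarith only [h1, h2]
  have hq : (6:ℝ) ≤ 8 - (1+3*ω)^3 := by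
    nlinarith only [hω.le, hω', mul_nonneg hω.le (by linarith only [hω'] : (0:ℝ) ≤ 1/100 - ω),
      mul_nonneg (sq_nonneg ω) (by linarith only [hω'] : (0:ℝ) ≤ 1/100 - ω)]
  have e2 : 6*a 0 ≤ -8*(a 1 + a 2 + a 3 + a 4 + a 5 + a 6)
      + (a 1 + a 2 + a 3 + a 4 + a 5 + a 6)*(1+3*ω)^3 := by
    have hAn : 0 ≤ -(a 1 + a 2 + a 3 + a 4 + a 5 + a 6) := by
      linarith only [hA, ha0]
    have h1 : (-(a 1 + a 2 + a 3 + a 4 + a 5 + a 6))*6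
        ≤ (-(a 1 + a 2 + a 3 + a 4 + a 5 + a 6))*(8 - (1+3*ω)^3) :=
      mul_le_mul_of_nonneg_left hq hAn
    linarith only [h1, hA, ha0]
  have hEmul : E*P^2 = 4*(K 0 + K 1 + K 2 + K 3 + K 4 + K 5 + K 6 + K 7 + K 8)*P^2 := by
    rw [hEdef]
  have hK0P : 0 ≤ K 0 * P^2 := mul_nonneg (hK0 0) (sq_nonneg P)
  -- condition (i)
  have goal1 : (h 0).eval P + Sv ≤ -(1/2) := by
    have hr0 := (abs_le.mp (hKbd 0 P hP1)).2
    have e1P : (a 0 + (a 1 + a 2 + a 3 + a 4 + a 5 + a 6)*(1+2*ω)^3) * P^3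
        ≤ (-(6*(a 0*ω)))*P^3 := mul_le_mul_of_nonneg_right e1 (pow_nonneg hP0.le 3)
    have hEP : E*P^2 ≤ (3*(a 0*ω))*P * P^2 :=
      mul_le_mul_of_nonneg_right hE3 (sq_nonneg P)
    have hm3 : 3*(a 0*ω)*P ≤ 3*(a 0*ω)*P^3 :=
      mul_le_mul_of_nonneg_left hP3 (by linarith only [haω])
    rw [hSexp]
    linarith only [b1u, b2u, b3u, b4u, b5u, b6u, b7u, b8u, hr0, e1P, hEP, hK0P,
      hm3, hhalf, hEmul]
  -- condition (ii)
  have goal2 : 1/2 ≤ (h 0).eval (c*P) + Sv := by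
    have hr0 := (abs_le.mp (hKbd 0 (c*P) hcP1)).1
    have hc'P : a 0 * c^3 * P^3 = -8*(a 1 + a 2 + a 3 + a 4 + a 5 + a 6) * P^3 := by
      rw [hc']
    have e2P : (6*a 0)*P^3 ≤ (-8*(a 1 + a 2 + a 3 + a 4 + a 5 + a 6)
        + (a 1 + a 2 + a 3 + a 4 + a 5 + a 6)*(1+3*ω)^3)*P^3 :=
      mul_le_mul_of_nonneg_right e2 (pow_nonneg hP0.le 3)
    have herr : (K 0*c^2 + E)*P^2 ≤ (K 0*c^2 + E)*P^((12:ℝ)/5) :=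
      mul_le_mul_of_nonneg_left hP212
        (by linarith only [mul_nonneg (hK0 0) (sq_nonneg c), hE0])
    have habs7P : 8*(a 7)*P^((12:ℝ)/5) = -(8 * |a 7| * P^((12:ℝ)/5)) := by
      rw [abs_of_neg (han 7 (by decide))]; ring
    have habs8P : 8*(a 8)*P^((12:ℝ)/5) = -(8 * |a 8| * P^((12:ℝ)/5)) := by
      rw [abs_of_neg (han 8 (by decide))]; ring
    have hGmul : G*P^((12:ℝ)/5) = 8*(|a 7| + |a 8|) * P^((12:ℝ)/5)
        + K 0*c^2*P^((12:ℝ)/5) + E*P^((12:ℝ)/5) := by rw [hGdef]; ring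
    have hGP : G*P^((12:ℝ)/5) ≤ 3*a 0*P^3 := by
      calc G*P^((12:ℝ)/5) ≤ (3*a 0*P^((3:ℝ)/5))*P^((12:ℝ)/5) :=
            mul_le_mul_of_nonneg_right hG3 (Real.rpow_nonneg hP0.le _)
      _ = 3*a 0*(P^((12:ℝ)/5) * P^((3:ℝ)/5)) := by ring
      _ = 3*a 0*P^3 := by rw [hP1235]
    have hm3 : 3*a 0*P ≤ 3*a 0*P^3 :=
      mul_le_mul_of_nonneg_left hP3 (by linarith only [ha0])
    have h6 : 6*(a 0*ω)*P ≤ 6*a 0*P := by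
      have h0 : (0:ℝ) ≤ 6*a 0*P := by
        linarith only [mul_nonneg ha0.le hP0.le]
      have h1 := mul_le_mul_of_nonneg_left (show ω ≤ 1 by linarith only [hω']) h0
      linarith only [h1]
    rw [hSexp]
    linarith only [b1l, b2l, b3l, b4l, b5l, b6l, b7l, b8l, hr0, hc'P, e2P, herr,
      habs7P, habs8P, hGmul, hGP, hm3, h6, hhalf, hEmul, hK0P]
  -- IVT
  have hmem : -Sv ∈ Set.Icc ((h 0).eval P) ((h 0).eval (c*P)) :=
    ⟨by linarith only [goal1], by linarith only [goal2]⟩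
  obtain ⟨t₀, ht₀, ht₀eq⟩ := intermediate_value_Icc hPcP
    ((h 0).continuous).continuousOn hmem
  have ht₀eq' : (h 0).eval t₀ = -Sv := ht₀eq
  have hM : 0 < L*(c*P)^2 := mul_pos hLpos (pow_pos (by linarith only [hcP1]) 2)
  have hLip : ∀ s t : ℝ, P ≤ s → s ≤ c*P → P ≤ t → t ≤ c*P →
      |(h 0).eval s - (h 0).eval t| ≤ (L*(c*P)^2) * |s - t| := by
    intro s t hs1 hs2 ht1 ht2
    have hfac : (h 0).eval s - (h 0).eval t
        = (s - t) * ((h 0).coeff 3 * (s^2+s*t+t^2)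
          + (h 0).coeff 2 * (s+t) + (h 0).coeff 1) := by
      rw [cubic_eval _ (hnd 0), cubic_eval _ (hnd 0)]; ring
    rw [hfac, abs_mul, mul_comm]
    apply mul_le_mul_of_nonneg_right _ (abs_nonneg (s - t))
    have h0s : (0:ℝ) ≤ s := by linarith only [hP0, hs1]
    have h0t : (0:ℝ) ≤ t := by linarith only [hP0, ht1]
    have hR0 : (0:ℝ) ≤ c*P := by linarith only [hcP1]
    have q30 : (0:ℝ) ≤ s^2+s*t+t^2 := by
      nlinarith only [mul_nonneg h0s h0t, sq_nonneg s, sq_nonneg t]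
    have q3 : s^2+s*t+t^2 ≤ 3*(c*P)^2 := by
      nlinarith only [mul_nonneg h0s (by linarith only [hs2] : (0:ℝ) ≤ c*P - s),
        mul_nonneg h0t (by linarith only [ht2] : (0:ℝ) ≤ c*P - t),
        mul_nonneg hR0 (by linarith only [hs2] : (0:ℝ) ≤ c*P - s),
        mul_nonneg hR0 (by linarith only [ht2] : (0:ℝ) ≤ c*P - t),
        mul_nonneg h0s (by linarith only [ht2] : (0:ℝ) ≤ c*P - t)]
    have hb3 : |(h 0).coeff 3 * (s^2+s*t+t^2)| ≤ |(h 0).coeff 3| * (3*(c*P)^2) := by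
      rw [abs_mul]
      exact mul_le_mul_of_nonneg_left (by rw [abs_of_nonneg q30]; exact q3) (abs_nonneg _)
    have hb2 : |(h 0).coeff 2 * (s+t)| ≤ |(h 0).coeff 2| * (2*(c*P)) := by
      rw [abs_mul]
      refine mul_le_mul_of_nonneg_left ?_ (abs_nonneg _)
      rw [abs_of_nonneg (by linarith only [h0s, h0t])]
      linarith only [hs2, ht2]
    have htri := abs_add_three ((h 0).coeff 3 * (s^2+s*t+t^2))
      ((h 0).coeff 2 * (s+t)) ((h 0).coeff 1)
    have hRR : c*P ≤ (c*P)^2 := by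
      nlinarith only [hcP1]
    have hR2 : (1:ℝ) ≤ (c*P)^2 := by nlinarith only [hcP1]
    have m2 : |(h 0).coeff 2| * (2*(c*P)) ≤ |(h 0).coeff 2| * (2*(c*P)^2) :=
      mul_le_mul_of_nonneg_left (by linarith only [hRR]) (abs_nonneg _)
    have m1 : |(h 0).coeff 1| * 1 ≤ |(h 0).coeff 1| * (c*P)^2 :=
      mul_le_mul_of_nonneg_left hR2 (abs_nonneg _)
    rw [hLdef, hac 0]
    linarith only [htri, hb3, hb2, m2, m1, hR2]
  obtain ⟨δ, hδdef⟩ : ∃ δ : ℝ, δ = 1/(2*(L*(c*P)^2)) := ⟨_, rfl⟩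
  have hδpos : 0 < δ := by
    rw [hδdef]; exact div_pos one_pos (by linarith only [hM])
  have hMδ : (L*(c*P)^2) * δ = 1/2 := by
    rw [hδdef]
    field_simp
  have hlow : P + δ ≤ t₀ := by
    have h1 := hLip t₀ P ht₀.1 ht₀.2 le_rfl hPcP
    rw [ht₀eq'] at h1
    have h2 : (1:ℝ)/2 ≤ |-Sv - (h 0).eval P| := by
      rw [show -Sv - (h 0).eval P = -((h 0).eval P + Sv) from by ring, abs_neg,
        abs_of_nonpos (by linarith only [goal1])]
      linarith only [goal1]
    rw [abs_of_nonneg (by linarith only [ht₀.1] : (0:ℝ) ≤ t₀ - P)] at h1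
    have h4 : δ ≤ t₀ - P := by
      rw [hδdef, div_le_iff₀ (show (0:ℝ) < 2*(L*(c*P)^2) by linarith only [hM])]
      nlinarith only [h1, h2]
    linarith only [h4]
  have hhigh : t₀ + δ ≤ c*P := by
    have h1 := hLip (c*P) t₀ hPcP le_rfl ht₀.1 ht₀.2
    rw [ht₀eq'] at h1
    have h2 : (1:ℝ)/2 ≤ |(h 0).eval (c*P) - -Sv| := by
      rw [show (h 0).eval (c*P) - -Sv = (h 0).eval (c*P) + Sv from by ring,
        abs_of_nonneg (by linarith only [goal2])]
      linarith only [goal2]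
    rw [abs_of_nonneg (by linarith only [ht₀.2] : (0:ℝ) ≤ c*P - t₀)] at h1
    have h4 : δ ≤ c*P - t₀ := by
      rw [hδdef, div_le_iff₀ (show (0:ℝ) < 2*(L*(c*P)^2) by linarith only [hM])]
      nlinarith only [h1, h2]
    linarith only [h4]
  have hsub : Set.Icc (t₀ - δ) (t₀ + δ)
      ⊆ {t ∈ Set.Icc P (c * P) | |(h 0).eval t + Sv| ≤ 1/2} := by
    intro t ht
    obtain ⟨h5, h6⟩ := ht
    refine ⟨⟨by linarith only [h5, hlow], by linarith only [h6, hhigh]⟩, ?_⟩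
    have h7 := hLip t t₀ (by linarith only [h5, hlow]) (by linarith only [h6, hhigh])
      ht₀.1 ht₀.2
    rw [ht₀eq', show (h 0).eval t - -Sv = (h 0).eval t + Sv from by ring] at h7
    have h8 : |t - t₀| ≤ δ := abs_le.mpr ⟨by linarith only [h5], by linarith only [h6]⟩
    have h9 : (L*(c*P)^2)*|t - t₀| ≤ (L*(c*P)^2)*δ :=
      mul_le_mul_of_nonneg_left h8 hM.le
    show |(h 0).eval t + Sv| ≤ 1/2
    linarith only [h7, h9, hMδ.le, hMδ.ge]
  calc ENNReal.ofReal ((L * c^2)⁻¹ * P ^ (-(2:ℝ)))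
      = ENNReal.ofReal (t₀ + δ - (t₀ - δ)) := by
        congr 1
        rw [Real.rpow_neg hP0.le,
          show P ^ ((2:ℝ)) = P^(2:ℕ) from by rw [← Real.rpow_natCast P 2]; norm_num,
          hδdef]
        have hLne : L ≠ 0 := ne_of_gt hLpos
        have hcne : c ≠ 0 := ne_of_gt hcpos
        have hPne : P ≠ 0 := ne_of_gt hP0
        field_simp
        ring
    _ = volume (Set.Icc (t₀ - δ) (t₀ + δ)) := (Real.volume_Icc).symm
    _ ≤ volume {t ∈ Set.Icc P (c * P) | |(h 0).eval t + Sv| ≤ 1/2} :=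
        measure_mono hsub
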